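/- arXiv:1204.5981 — 3 statements merged into one kernel-verified Lean document; each statement's English description precedes it below -/
import Mathlib

section
/- For finite relational structures A and B, there exist homomorphisms both from A to B and from B to A if and only if A and B satisfy exactly the same primitive positive sentences. -/
/-- A relational signature: a type of relation symbols with arities. -/
structure Signature where
  symb : Type
  ar : symb → ℕ

/-- A relational structure over signature `σ` with domain `α`. -/
structure Struc (σ : Signature) (α : Type) where
  rel : ∀ s, (Fin (σ.ar s) → α) → Prop

/-- A homomorphism between relational structures. -/
def IsHom {σ : Signature} {α β : Type} (A : Struc σ α) (B : Struc σ β)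
    (h : α → β) : Prop :=
  ∀ s t, A.rel s t → B.rel s (fun i => h (t i))

/-- Primitive positive formulas (relational atoms, conjunction — including the
empty conjunction `top` — and existential quantification), with `n` free variables. -/
inductive PP (σ : Signature) : ℕ → Type
  | top {n} : PP σ n
  | atom {n} (s : σ.symb) (ts : Fin (σ.ar s) → Fin n) : PP σ n
  | and {n} : PP σ n → PP σ n → PP σ n
  | ex {n} : PP σ (n + 1) → PP σ n

/-- Satisfaction of a primitive positive formula under a valuation. -/
def PP.Sat {σ : Signature} {α : Type} (A : Struc σ α) :
    ∀ {n}, PP σ n → (Fin n → α) → Prop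
  | _, .top, _ => True
  | _, .atom s ts, v => A.rel s (fun i => v (ts i))
  | _, .and φ ψ, v => φ.Sat A v ∧ ψ.Sat A v
  | _, .ex φ, v => ∃ a, φ.Sat A (Fin.cons a v)

/-- pp formulas are preserved by homomorphisms. -/
lemma sat_map {σ : Signature} {α β : Type} {A : Struc σ α} {B : Struc σ β} {h : α → β}
    (hh : IsHom A B h) : ∀ {n : ℕ} (φ : PP σ n) (v : Fin n → α),
      φ.Sat A v → φ.Sat B (fun i => h (v i)) := by
  intro n φ
  induction φ with
  | top => intro v _; trivial
  | atom s ts => intro v hs; exact hh s _ hs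
  | and φ ψ ih1 ih2 => exact fun v hs => ⟨ih1 v hs.1, ih2 v hs.2⟩
  | ex φ ih =>
    rintro v ⟨a, hs⟩
    refine ⟨h a, ?_⟩
    have := ih _ hs
    have he : (fun i => h ((Fin.cons a v : Fin _ → α) i)) =
        (Fin.cons (h a) (fun i => h (v i)) : Fin _ → β) := by
      funext i
      refine Fin.cases ?_ (fun j => ?_) i <;> simp
    rwa [he] at this

/-- Conjunction of a list of atoms. -/
def conj {σ : Signature} {n : ℕ} (L : List ((s : σ.symb) × (Fin (σ.ar s) → Fin n))) :
    PP σ n :=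
  L.foldr (fun p acc => .and (.atom p.1 p.2) acc) .top

lemma conj_sat {σ : Signature} {α : Type} {n : ℕ} (A : Struc σ α)
    (L : List ((s : σ.symb) × (Fin (σ.ar s) → Fin n))) (v : Fin n → α) :
    (conj L).Sat A v ↔ ∀ p ∈ L, A.rel p.1 (fun i => v (p.2 i)) := by
  induction L with
  | nil => simp [conj, PP.Sat]
  | cons p L ih =>
    simp only [conj, List.foldr_cons, PP.Sat, List.mem_cons] at *
    rw [ih]
    constructor
    · rintro ⟨h1, h2⟩ q hq
      rcases hq with rfl | hq
      · exact h1
      · exact h2 q hq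
    · intro h
      exact ⟨h p (Or.inl rfl), fun q hq => h q (Or.inr hq)⟩

/-- Existential closure. -/
def exN {σ : Signature} : ∀ n, PP σ n → PP σ 0
  | 0, φ => φ
  | n + 1, φ => exN n (.ex φ)

lemma exN_sat {σ : Signature} {α : Type} (A : Struc σ α) :
    ∀ (n : ℕ) (φ : PP σ n), (exN n φ).Sat A Fin.elim0 ↔ ∃ v : Fin n → α, φ.Sat A v := by
  intro n
  induction n with
  | zero =>
    intro φ
    constructor
    · intro h; exact ⟨Fin.elim0, h⟩
    · rintro ⟨v, h⟩
      have : v = Fin.elim0 := funext fun i => i.elim0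
      rwa [this] at h
  | succ n ih =>
    intro φ
    rw [exN, ih]
    constructor
    · rintro ⟨v, a, h⟩
      exact ⟨Fin.cons a v, h⟩
    · rintro ⟨v, h⟩
      refine ⟨Fin.tail v, v 0, ?_⟩
      rwa [Fin.cons_self_tail]

lemma exists_hom {σ : Signature} {α β : Type} [Finite α] [Finite β]
    (A : Struc σ α) (B : Struc σ β)
    (H : ∀ φ : PP σ 0, φ.Sat A Fin.elim0 → φ.Sat B Fin.elim0) :
    ∃ h : α → β, IsHom A B h := by
  by_contra hc
  push_neg at hc
  have hc' : ∀ h : α → β, ∃ s t, A.rel s t ∧ ¬ B.rel s (fun i => h (t i)) := by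
    intro h
    have := hc h
    unfold IsHom at this
    push_neg at this
    exact this
  choose s t hA hB using hc'
  obtain ⟨n, ⟨e⟩⟩ := Finite.exists_equiv_fin α
  have : Fintype (α → β) := Fintype.ofFinite _
  set L : List ((s : σ.symb) × (Fin (σ.ar s) → Fin n)) :=
    (Finset.univ : Finset (α → β)).toList.map (fun h => ⟨s h, fun i => e (t h i)⟩) with hL
  have hAsat : (exN n (conj L)).Sat A Fin.elim0 := by
    rw [exN_sat]
    refine ⟨fun i => e.symm i, ?_⟩
    rw [conj_sat]
    intro p hp
    rw [hL, List.mem_map] at hp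
    obtain ⟨h, -, rfl⟩ := hp
    simpa using hA h
  have hBsat := H _ hAsat
  rw [exN_sat] at hBsat
  obtain ⟨v, hv⟩ := hBsat
  rw [conj_sat] at hv
  apply hB (fun a => v (e a))
  have hmem : (⟨s (fun a => v (e a)), fun i => e (t (fun a => v (e a)) i)⟩ :
      (s : σ.symb) × (Fin (σ.ar s) → Fin n)) ∈ L := by
    rw [hL, List.mem_map]
    exact ⟨fun a => v (e a), by simp, rfl⟩
  exact hv _ hmem

/-- Finite structures `A` and `B` admit homomorphisms in both
directions iff they satisfy exactly the same primitive positive sentences. -/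
theorem hom_equiv_iff_same_pp {σ : Signature} {α β : Type} [Finite α] [Finite β]
    (A : Struc σ α) (B : Struc σ β) :
    ((∃ h : α → β, IsHom A B h) ∧ (∃ g : β → α, IsHom B A g)) ↔
      (∀ φ : PP σ 0, φ.Sat A Fin.elim0 ↔ φ.Sat B Fin.elim0) := by
  constructor
  · rintro ⟨⟨h, hh⟩, ⟨g, hg⟩⟩ φ
    constructor
    · intro hs
      have := sat_map hh φ Fin.elim0 hs
      have he : (fun i : Fin 0 => h (Fin.elim0 i)) = Fin.elim0 := funext fun i => i.elim0
      rwa [he] at this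
    · intro hs
      have := sat_map hg φ Fin.elim0 hs
      have he : (fun i : Fin 0 => g (Fin.elim0 i)) = Fin.elim0 := funext fun i => i.elim0
      rwa [he] at this
  · intro H
    exact ⟨exists_hom A B (fun φ => (H φ).1), exists_hom B A (fun φ => (H φ).2)⟩
end

section
/- For finite relational structures A and B: if B satisfies the canonical positive equality-free sentence θ_{A,|B|} of A, then there exists a surjective hypermorphism from A to B. -/
/-- Positive equality-free first-order formulas (relational atoms, ∧, ∨ — including
the empty conjunction `top` and empty disjunction `bot` — ∃ and ∀), `n` free variables. -/
inductive PEF (σ : Signature) : ℕ → Type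
  | top {n} : PEF σ n
  | bot {n} : PEF σ n
  | atom {n} (s : σ.symb) (ts : Fin (σ.ar s) → Fin n) : PEF σ n
  | and {n} : PEF σ n → PEF σ n → PEF σ n
  | or {n} : PEF σ n → PEF σ n → PEF σ n
  | ex {n} : PEF σ (n + 1) → PEF σ n
  | all {n} : PEF σ (n + 1) → PEF σ n

/-- Satisfaction of a positive equality-free formula under a valuation. -/
def PEF.Sat {σ : Signature} {α : Type} (A : Struc σ α) :
    ∀ {n}, PEF σ n → (Fin n → α) → Prop
  | _, .top, _ => True
  | _, .bot, _ => False
  | _, .atom s ts, v => A.rel s (fun i => v (ts i))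
  | _, .and φ ψ, v => φ.Sat A v ∧ ψ.Sat A v
  | _, .or φ ψ, v => φ.Sat A v ∨ ψ.Sat A v
  | _, .ex φ, v => ∃ a, φ.Sat A (Fin.cons a v)
  | _, .all φ, v => ∀ a, φ.Sat A (Fin.cons a v)

/-- A surjective hypermorphism from `A` to `B`: a total, surjective, preserving
multivalued map from the domain of `A` to subsets of the domain of `B`. -/
structure SurjHyper {σ : Signature} {α β : Type} (A : Struc σ α) (B : Struc σ β)
    (f : α → Set β) : Prop where
  total : ∀ a, (f a).Nonempty
  surj : ∀ b, ∃ a, b ∈ f a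
  pres : ∀ s (t : Fin (σ.ar s) → α) (u : Fin (σ.ar s) → β),
    A.rel s t → (∀ i, u i ∈ f (t i)) → B.rel s u

/-- Conjunction of a list of formulas. -/
def PEF.conjList {σ : Signature} {n : ℕ} : List (PEF σ n) → PEF σ n
  | [] => .top
  | φ :: l => .and φ (conjList l)

/-- Disjunction of a list of formulas. -/
def PEF.orList {σ : Signature} {n : ℕ} : List (PEF σ n) → PEF σ n
  | [] => .bot
  | φ :: l => .or φ (orList l)

/-- Existentially quantify the `m` innermost variables. -/
def PEF.exs {σ : Signature} : ∀ {k m : ℕ}, PEF σ (k + m) → PEF σ k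
  | _, 0, φ => φ
  | _, m + 1, φ => PEF.exs (m := m) φ.ex

/-- Universally quantify the `m` innermost variables. -/
def PEF.alls {σ : Signature} : ∀ {k m : ℕ}, PEF σ (k + m) → PEF σ k
  | _, 0, φ => φ
  | _, m + 1, φ => PEF.alls (m := m) φ.all

/-- The conjunction of all atoms expressing the positive facts of `A` on the tuple
of elements `g` (the diagram formula `φ_{A(g)}`). -/
noncomputable def diagram {σ : Signature} [Fintype σ.symb] [DecidableEq σ.symb]
    {α : Type} [Fintype α] [DecidableEq α]
    (A : Struc σ α) [∀ s t, Decidable (A.rel s t)] {k : ℕ} (g : Fin k → α) :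
    PEF σ k :=
  PEF.conjList
    (((Finset.univ.filter
        (fun p : Σ s : σ.symb, Fin (σ.ar s) → Fin k =>
          A.rel p.1 (fun i => g (p.2 i)))).toList).map
      (fun p => PEF.atom p.1 p.2))

/-- The canonical positive equality-free sentence
`θ_{A,m} = ∃v̄ (φ_{A(r̄)}(v̄) ∧ ∀w̄ ⋁_{t̄ ∈ A^m} φ_{A(r̄,t̄)}(v̄,w̄))`,
where `r̄` enumerates the elements of `A` via `e`. -/
noncomputable def theta {σ : Signature} [Fintype σ.symb] [DecidableEq σ.symb]
    {α : Type} [Fintype α] [DecidableEq α]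
    (A : Struc σ α) [∀ s t, Decidable (A.rel s t)]
    (n : ℕ) (e : α ≃ Fin n) (m : ℕ) : PEF σ 0 :=
  PEF.exs (k := 0) (m := n) (PEF.and
    (diagram A (fun i : Fin (0 + n) => e.symm ⟨(i : ℕ), by have := i.isLt; omega⟩))
    (PEF.alls (k := 0 + n) (m := m)
      (PEF.orList ((Finset.univ : Finset (Fin m → α)).toList.map (fun t =>
        diagram A (fun j : Fin ((0 + n) + m) =>
          if h : (j : ℕ) < m then t ⟨(j : ℕ), h⟩
          else e.symm ⟨(j : ℕ) - m, by have := j.isLt; omega⟩))))))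

section Aux

variable {σ : Signature} {β : Type}

/-- Combined valuation: `m` inner values followed by `k` outer values. -/
def mix {γ : Type} {k m : ℕ} (u : Fin m → γ) (v : Fin k → γ) : Fin (k + m) → γ :=
  fun j => if h : (j : ℕ) < m then u ⟨j, h⟩
    else v ⟨(j : ℕ) - m, by have := j.isLt; omega⟩

lemma mix_zero {γ : Type} {k : ℕ} (u : Fin 0 → γ) (v : Fin k → γ) :
    mix u v = v := by
  funext j
  simp [mix]

lemma mix_cons {γ : Type} {k m : ℕ} (a : γ) (u : Fin m → γ) (v : Fin k → γ) :
    (Fin.cons a (mix u v) : Fin (k + m + 1) → γ) = mix (Fin.cons a u) v := by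
  funext j
  refine Fin.cases ?_ ?_ j
  · simp [mix]
  · intro i
    simp only [Fin.cons_succ, mix, Fin.val_succ]
    by_cases hi : (i : ℕ) < m
    · rw [dif_pos hi, dif_pos (by omega)]
      have : (⟨(i : ℕ) + 1, by omega⟩ : Fin (m + 1)) = Fin.succ ⟨(i : ℕ), hi⟩ := rfl
      rw [this, Fin.cons_succ]
    · rw [dif_neg hi, dif_neg (by omega)]
      congr 1
      apply Fin.ext
      simp

lemma sat_conjList (B : Struc σ β) {n : ℕ} (l : List (PEF σ n)) (v : Fin n → β) :
    (PEF.conjList l).Sat B v ↔ ∀ φ ∈ l, φ.Sat B v := by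
  induction l with
  | nil => simp [PEF.conjList, PEF.Sat]
  | cons a l ih => simp [PEF.conjList, PEF.Sat, ih]

lemma sat_orList (B : Struc σ β) {n : ℕ} (l : List (PEF σ n)) (v : Fin n → β) :
    (PEF.orList l).Sat B v ↔ ∃ φ ∈ l, φ.Sat B v := by
  induction l with
  | nil => simp [PEF.orList, PEF.Sat]
  | cons a l ih => simp [PEF.orList, PEF.Sat, ih]

lemma sat_exs (B : Struc σ β) {k m : ℕ} (φ : PEF σ (k + m)) (v : Fin k → β) :
    (PEF.exs φ).Sat B v ↔ ∃ u : Fin m → β, φ.Sat B (mix u v) := by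
  induction m with
  | zero =>
    simp only [PEF.exs]
    constructor
    · intro hφ
      exact ⟨Fin.elim0, by rwa [mix_zero]⟩
    · rintro ⟨u, hφ⟩
      rwa [mix_zero] at hφ
  | succ m ih =>
    rw [show PEF.exs φ = PEF.exs (m := m) φ.ex from rfl, ih]
    constructor
    · rintro ⟨u, a, hφ⟩
      exact ⟨Fin.cons a u, by rwa [← mix_cons]⟩
    · rintro ⟨u, hφ⟩
      refine ⟨Fin.tail u, u 0, ?_⟩
      rw [mix_cons, Fin.cons_self_tail]
      exact hφ

lemma sat_alls (B : Struc σ β) {k m : ℕ} (φ : PEF σ (k + m)) (v : Fin k → β) :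
    (PEF.alls φ).Sat B v ↔ ∀ u : Fin m → β, φ.Sat B (mix u v) := by
  induction m with
  | zero =>
    simp only [PEF.alls]
    constructor
    · intro hφ u
      rwa [mix_zero]
    · intro hφ
      have := hφ Fin.elim0
      rwa [mix_zero] at this
  | succ m ih =>
    rw [show PEF.alls φ = PEF.alls (m := m) φ.all from rfl, ih]
    constructor
    · intro hφ u
      have := hφ (Fin.tail u) (u 0)
      rwa [mix_cons, Fin.cons_self_tail] at this
    · intro hφ u a
      rw [mix_cons]
      exact hφ _

lemma sat_diagram {α : Type} [Fintype σ.symb] [DecidableEq σ.symb]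
    [Fintype α] [DecidableEq α]
    (A : Struc σ α) [∀ s t, Decidable (A.rel s t)] (B : Struc σ β)
    {k : ℕ} (g : Fin k → α) (v : Fin k → β)
    (h : (diagram A g).Sat B v) :
    ∀ s (ts : Fin (σ.ar s) → Fin k),
      A.rel s (fun i => g (ts i)) → B.rel s (fun i => v (ts i)) := by
  intro s ts hs
  have hmem : (PEF.atom s ts : PEF σ k) ∈
      (((Finset.univ.filter
        (fun p : Σ s : σ.symb, Fin (σ.ar s) → Fin k =>
          A.rel p.1 (fun i => g (p.2 i)))).toList).map
        (fun p => PEF.atom p.1 p.2)) :=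
    List.mem_map.2 ⟨⟨s, ts⟩, Finset.mem_toList.2
      (Finset.mem_filter.2 ⟨Finset.mem_univ _, hs⟩), rfl⟩
  exact (sat_conjList B _ v).1 h _ hmem

end Aux

/-- If `B` satisfies the canonical positive equality-free sentence
`θ_{A,|B|}` of `A`, then there is a surjective hypermorphism from `A` to `B`. -/
theorem surjHyper_of_sat_theta {σ : Signature} [Fintype σ.symb] [DecidableEq σ.symb]
    {α β : Type} [Fintype α] [DecidableEq α] [Fintype β]
    (A : Struc σ α) (B : Struc σ β) [∀ s t, Decidable (A.rel s t)]
    (n : ℕ) (e : α ≃ Fin n)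
    (h : (theta A n e (Fintype.card β)).Sat B Fin.elim0) :
    ∃ f : α → Set β, SurjHyper A B f := by
  classical
  set m := Fintype.card β with hm
  rw [theta, sat_exs] at h
  obtain ⟨u, hu⟩ := h
  have h2 := (sat_alls B _ _).1 hu.2
  set eb : β ≃ Fin m := Fintype.equivFin β with heb
  set w : Fin m → β := fun j => eb.symm j with hw
  have h3 := (sat_orList B _ _).1 (h2 w)
  obtain ⟨ψ, hψmem, hψ⟩ := h3
  rw [List.mem_map] at hψmem
  obtain ⟨t, -, rfl⟩ := hψmem
  -- the picked diagram
  have hdiag := sat_diagram A B _ _ hψ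
  set V0 : Fin (0 + n) → β := mix u Fin.elim0 with hV0
  refine ⟨fun a => {b | b = u (e a) ∨ ∃ j : Fin m, t j = a ∧ w j = b}, ?_, ?_, ?_⟩
  · intro a
    exact ⟨u (e a), Or.inl rfl⟩
  · intro b
    exact ⟨t (eb b), Or.inr ⟨eb b, rfl, by simp [hw]⟩⟩
  · intro s tup bs hrel hbs
    set idx : Fin (σ.ar s) → Fin ((0 + n) + m) := fun i =>
      if hi : ∃ j : Fin m, t j = tup i ∧ w j = bs i
      then ⟨(hi.choose : ℕ), by have := hi.choose.isLt; omega⟩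
      else ⟨m + (e (tup i) : ℕ), by have := (e (tup i)).isLt; omega⟩ with hidx
    have hg : ∀ i, (fun j : Fin ((0 + n) + m) =>
        if h : (j : ℕ) < m then t ⟨(j : ℕ), h⟩
        else e.symm ⟨(j : ℕ) - m, by have := j.isLt; omega⟩) (idx i) = tup i := by
      intro i
      rw [hidx]
      by_cases hi : ∃ j : Fin m, t j = tup i ∧ w j = bs i
      · simp only [dif_pos hi]
        rw [dif_pos (by simpa using hi.choose.isLt)]
        simpa using hi.choose_spec.1
      · simp only [dif_neg hi]
        rw [dif_neg (by simp)]
        have : (⟨m + (e (tup i) : ℕ) - m, by have := (e (tup i)).isLt; omega⟩ : Fin n)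
            = e (tup i) := by
          ext; simp
        rw [this, Equiv.symm_apply_apply]
    have hW : ∀ i, (mix w V0) (idx i) = bs i := by
      intro i
      rw [hidx]
      by_cases hi : ∃ j : Fin m, t j = tup i ∧ w j = bs i
      · simp only [dif_pos hi, mix]
        rw [dif_pos (by simpa using hi.choose.isLt)]
        simpa using hi.choose_spec.2
      · simp only [dif_neg hi, mix]
        rw [dif_neg (by simp)]
        rw [hV0]
        simp only [mix]
        rw [dif_pos (by have := (e (tup i)).isLt; simpa using this)]
        have hb := hbs i
        rcases hb with hb | hb
        · refine (congrArg u (Fin.ext ?_)).trans hb.symm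
          simp
        · exact absurd hb hi
    have hArel : A.rel s (fun i => (fun j : Fin ((0 + n) + m) =>
        if h : (j : ℕ) < m then t ⟨(j : ℕ), h⟩
        else e.symm ⟨(j : ℕ) - m, by have := j.isLt; omega⟩) (idx i)) := by
      have : (fun i => (fun j : Fin ((0 + n) + m) =>
        if h : (j : ℕ) < m then t ⟨(j : ℕ), h⟩
        else e.symm ⟨(j : ℕ) - m, by have := j.isLt; omega⟩) (idx i)) = tup := funext hg
      rw [this]; exact hrel
    have := hdiag s idx hArel
    have hbs' : (fun i => (mix w V0) (idx i)) = bs := funext hW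
    rwa [hbs'] at this
end

section
/- For a finite relational structure A over a finite signature σ, the following are equivalent: (1) A satisfies no proper positive Horn sentence; (2) A satisfies none of the r(σ) minimal proper positive Horn sentences ∀x_1 ∃x_2 ... ∃x_{r_i} R_i(x̄) (for each relation symbol R_i and each position of the universal variable in R_i); (3) the power A^{r(σ)} contains an isolated element (an element occurring in no tuple of any relation). -/
/-- Positive Horn formulas (relational atoms, conjunction — including the empty
conjunction `top` — existential and universal quantification), with `n` free variables. -/
inductive PH (σ : Signature) : ℕ → Type
  | top {n} : PH σ n
  | atom {n} (s : σ.symb) (ts : Fin (σ.ar s) → Fin n) : PH σ n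
  | and {n} : PH σ n → PH σ n → PH σ n
  | ex {n} : PH σ (n + 1) → PH σ n
  | all {n} : PH σ (n + 1) → PH σ n

/-- Satisfaction of a positive Horn formula under a valuation. -/
def PH.Sat {σ : Signature} {α : Type} (A : Struc σ α) :
    ∀ {n}, PH σ n → (Fin n → α) → Prop
  | _, .top, _ => True
  | _, .atom s ts, v => A.rel s (fun i => v (ts i))
  | _, .and φ ψ, v => φ.Sat A v ∧ ψ.Sat A v
  | _, .ex φ, v => ∃ a, φ.Sat A (Fin.cons a v)
  | _, .all φ, v => ∀ a, φ.Sat A (Fin.cons a v)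

/-- The `m`-th categorical power of a structure. -/
def pow {σ : Signature} {α : Type} (A : Struc σ α) (m : ℕ) : Struc σ (Fin m → α) :=
  ⟨fun s t => ∀ j, A.rel s (fun i => t i j)⟩

/-- Free variable `i` occurs in some atom of the positive Horn formula. -/
def PH.Occurs {σ : Signature} : ∀ {n}, PH σ n → Fin n → Prop
  | _, .top, _ => False
  | _, .atom _ ts, i => ∃ j, ts j = i
  | _, .and φ ψ, i => φ.Occurs i ∨ ψ.Occurs i
  | _, .ex φ, i => φ.Occurs i.succ
  | _, .all φ, i => φ.Occurs i.succ

/-- A positive Horn formula is proper if some universally quantified variable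
occurs in some atom of it. -/
def PH.Proper {σ : Signature} : ∀ {n}, PH σ n → Prop
  | _, .top => False
  | _, .atom _ _ => False
  | _, .and φ ψ => φ.Proper ∨ ψ.Proper
  | _, .ex φ => φ.Proper
  | _, .all φ => φ.Occurs 0 ∨ φ.Proper

/-- Close a formula by existential quantifiers, with a single outermost
universal quantifier (binding the last-closed variable). -/
def PH.closeAE {σ : Signature} : ∀ {k}, PH σ k → PH σ 0
  | 0, φ => φ
  | 1, φ => φ.all
  | _ + 2, φ => closeAE φ.ex

/-- The minimal proper positive Horn sentence `∀x₁ ∃x₂ … ∃x_r R_s(x̄)`, where the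
universally quantified variable `x₁` occupies position `p` of the atom (having
been transposed there) and the remaining positions carry the distinct
existentially quantified variables. -/
def minProper {σ : Signature} (s : σ.symb) (p : Fin (σ.ar s)) : PH σ 0 :=
  PH.closeAE (PH.atom s
    (fun i => Equiv.swap p ⟨σ.ar s - 1, by have := p.pos; omega⟩ i))

/-- An element of a structure is isolated if it appears in no tuple of any
relation. -/
def Isolated {σ : Signature} {α : Type} (A : Struc σ α) (x : α) : Prop :=
  ∀ s (t : Fin (σ.ar s) → α), A.rel s t → ∀ i, t i ≠ x


section Aux

variable {σ : Signature} {α : Type}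

/-- Satisfaction of `closeAE`: a universal over the last variable, existentials for the rest. -/
lemma sat_closeAE (A : Struc σ α) :
    ∀ {k} (hk : 0 < k) (φ : PH σ k),
      (PH.closeAE φ).Sat A Fin.elim0 ↔
        ∀ a : α, ∃ v : Fin k → α, v ⟨k - 1, by omega⟩ = a ∧ φ.Sat A v := by
  intro k
  induction k using Nat.strong_induction_on with
  | _ k ih =>
    match k with
    | 0 => intro hk; omega
    | 1 =>
      intro _ φ
      show (∀ a, φ.Sat A (Fin.cons a Fin.elim0)) ↔ _
      constructor
      · intro h a
        exact ⟨Fin.cons a Fin.elim0, rfl, h a⟩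
      · intro h a
        obtain ⟨v, hv, hs⟩ := h a
        have hev : Fin.cons a Fin.elim0 = v := by
          funext i
          have hi : i = (⟨0, by omega⟩ : Fin 1) := Fin.ext (by omega)
          rw [hi]; exact hv.symm
        rw [hev]; exact hs
    | (n + 2) =>
      intro _ φ
      show (PH.closeAE φ.ex).Sat A Fin.elim0 ↔ _
      rw [ih (n + 1) (by omega) (by omega) φ.ex]
      constructor
      · intro h a
        obtain ⟨v, hv, b, hb⟩ := h a
        refine ⟨Fin.cons b v, ?_, hb⟩
        have : (⟨n + 2 - 1, by omega⟩ : Fin (n + 2)) = (⟨n + 1 - 1, by omega⟩ : Fin (n + 1)).succ := by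
          apply Fin.ext; simp
        rw [this, Fin.cons_succ, hv]
      · intro h a
        obtain ⟨w, hw, hs⟩ := h a
        refine ⟨fun i => w i.succ, ?_, w 0, ?_⟩
        · exact hw
        · have : Fin.cons (w 0) (fun i => w i.succ) = w := by
            funext i
            refine Fin.cases ?_ ?_ i
            · simp
            · intro j; simp
          rw [this]; exact hs

/-- Satisfaction of the minimal proper sentence. -/
lemma minProper_sat_iff (A : Struc σ α) (s : σ.symb) (p : Fin (σ.ar s)) :
    (minProper s p).Sat A Fin.elim0 ↔
      ∀ a : α, ∃ v : Fin (σ.ar s) → α, v p = a ∧ A.rel s v := by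
  unfold minProper
  rw [sat_closeAE A p.pos]
  set q : Fin (σ.ar s) := ⟨σ.ar s - 1, by have := p.pos; omega⟩ with hq
  constructor
  · intro h a
    obtain ⟨w, hw, hs⟩ := h a
    refine ⟨fun i => w (Equiv.swap p q i), ?_, hs⟩
    show w (Equiv.swap p q p) = a
    rw [Equiv.swap_apply_left]; exact hw
  · intro h a
    obtain ⟨v, hv, hs⟩ := h a
    refine ⟨fun i => v (Equiv.swap p q i), ?_, ?_⟩
    · show v (Equiv.swap p q q) = a
      rw [Equiv.swap_apply_right]; exact hv
    · show A.rel s (fun i => v (Equiv.swap p q (Equiv.swap p q i)))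
      simpa [Equiv.swap_apply_self] using hs

/-- `closeAE` of a formula in which the last variable occurs is proper. -/
lemma proper_closeAE :
    ∀ {k} (hk : 0 < k) (φ : PH σ k), φ.Occurs ⟨k - 1, by omega⟩ → (PH.closeAE φ).Proper := by
  intro k
  induction k using Nat.strong_induction_on with
  | _ k ih =>
    match k with
    | 0 => intro hk; omega
    | 1 =>
      intro _ φ h
      exact Or.inl h
    | (n + 2) =>
      intro _ φ h
      refine ih (n + 1) (by omega) (by omega) φ.ex ?_
      show φ.Occurs (⟨n + 1 - 1, by omega⟩ : Fin (n + 1)).succ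
      have : (⟨n + 1 - 1, by omega⟩ : Fin (n + 1)).succ = (⟨n + 2 - 1, by omega⟩ : Fin (n + 2)) := by
        apply Fin.ext; simp
      rw [this]; exact h

lemma minProper_proper (s : σ.symb) (p : Fin (σ.ar s)) : (minProper s p).Proper := by
  unfold minProper
  refine proper_closeAE p.pos _ ?_
  refine ⟨p, ?_⟩
  show Equiv.swap p _ p = _
  rw [Equiv.swap_apply_left]

/-- If an isolated element is plugged at an occurring variable, the formula fails. -/
lemma occurs_not_sat {β : Type} (B : Struc σ β) (x : β) (hx : Isolated B x) :
    ∀ {n} (φ : PH σ n) (v : Fin n → β) (i : Fin n),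
      φ.Occurs i → v i = x → ¬ φ.Sat B v := by
  intro n φ
  induction φ with
  | top => intro v i h; exact absurd h not_false
  | atom s ts =>
    intro v i hocc hvi hsat
    obtain ⟨j, hj⟩ := hocc
    exact hx s (fun i' => v (ts i')) hsat j (by show v (ts j) = x; rw [hj, hvi])
  | and φ ψ ihφ ihψ =>
    intro v i hocc hvi hsat
    rcases hocc with h | h
    · exact ihφ v i h hvi hsat.1
    · exact ihψ v i h hvi hsat.2
  | ex φ ihφ =>
    intro v i hocc hvi hsat
    obtain ⟨a, ha⟩ := hsat
    exact ihφ (Fin.cons a v) i.succ hocc (by simpa using hvi) ha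
  | all φ ihφ =>
    intro v i hocc hvi hsat
    exact ihφ (Fin.cons x v) i.succ hocc (by simpa using hvi) (hsat x)

/-- A structure with an isolated element satisfies no proper positive Horn formula. -/
lemma proper_not_sat {β : Type} (B : Struc σ β) (x : β) (hx : Isolated B x) :
    ∀ {n} (φ : PH σ n) (v : Fin n → β), φ.Proper → ¬ φ.Sat B v := by
  intro n φ
  induction φ with
  | top => intro v h; exact absurd h not_false
  | atom s ts => intro v h; exact absurd h not_false
  | and φ ψ ihφ ihψ =>
    intro v hp hsat
    rcases hp with h | h
    · exact ihφ v h hsat.1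
    · exact ihψ v h hsat.2
  | ex φ ihφ =>
    intro v hp hsat
    obtain ⟨a, ha⟩ := hsat
    exact ihφ (Fin.cons a v) hp ha
  | all φ ihφ =>
    intro v hp hsat
    rcases hp with h | h
    · exact occurs_not_sat B x hx φ (Fin.cons x v) 0 h (by simp) (hsat x)
    · exact ihφ (Fin.cons x v) h (hsat x)

/-- Positive Horn formulas are preserved by powers. -/
lemma sat_pow (A : Struc σ α) (m : ℕ) :
    ∀ {n} (φ : PH σ n) (v : Fin n → Fin m → α),
      (∀ j, φ.Sat A (fun i => v i j)) → φ.Sat (pow A m) v := by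
  intro n φ
  induction φ with
  | top => intro v h; trivial
  | atom s ts => intro v h j; exact h j
  | and φ ψ ihφ ihψ => intro v h; exact ⟨ihφ v (fun j => (h j).1), ihψ v (fun j => (h j).2)⟩
  | ex φ ihφ =>
    intro v h
    choose a ha using h
    refine ⟨a, ihφ (Fin.cons a v) (fun j => ?_)⟩
    have : (fun i => (Fin.cons a v : Fin _ → Fin m → α) i j) = Fin.cons (a j) (fun i => v i j) := by
      funext i
      refine Fin.cases ?_ ?_ i <;> simp
    rw [this]; exact ha j
  | all φ ihφ =>
    intro v h b
    refine ihφ (Fin.cons b v) (fun j => ?_)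
    have : (fun i => (Fin.cons b v : Fin _ → Fin m → α) i j) = Fin.cons (b j) (fun i => v i j) := by
      funext i
      refine Fin.cases ?_ ?_ i <;> simp
    rw [this]; exact h j (b j)

end Aux

/-- For a finite structure `A` over a finite signature `σ`, the
following are equivalent: (1) `A` satisfies no proper positive Horn sentence;
(2) `A` satisfies none of the minimal proper positive Horn sentences; (3) the power
`A^{r(σ)}`, where `r(σ)` is the sum of the arities, contains an isolated element. -/
theorem no_proper_ph_tfae {σ : Signature} [Fintype σ.symb] {α : Type} [Finite α]
    (A : Struc σ α) :
    ((∀ φ : PH σ 0, φ.Proper → ¬ φ.Sat A Fin.elim0) ↔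
      (∀ s (p : Fin (σ.ar s)), ¬ (minProper s p).Sat A Fin.elim0)) ∧
    ((∀ s (p : Fin (σ.ar s)), ¬ (minProper s p).Sat A Fin.elim0) ↔
      (∃ x, Isolated (pow A (∑ s : σ.symb, σ.ar s)) x)) := by
  classical
  set r := ∑ s : σ.symb, σ.ar s with hr
  have h23 : (∀ s (p : Fin (σ.ar s)), ¬ (minProper s p).Sat A Fin.elim0) →
      ∃ x, Isolated (pow A r) x := by
    intro h2
    have key : ∀ sp : Σ s : σ.symb, Fin (σ.ar s),
        ∃ a : α, ∀ v : Fin (σ.ar sp.1) → α, A.rel sp.1 v → v sp.2 ≠ a := by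
      rintro ⟨s, p⟩
      have := h2 s p
      rw [minProper_sat_iff] at this
      push_neg at this
      obtain ⟨a, ha⟩ := this
      exact ⟨a, fun v hv hva => ha v hva hv⟩
    choose a ha using key
    have hcard : Fintype.card (Σ s : σ.symb, Fin (σ.ar s)) = r := by
      simp [Fintype.card_sigma, hr]
    let e : (Σ s : σ.symb, Fin (σ.ar s)) ≃ Fin r := Fintype.equivFinOfCardEq hcard
    refine ⟨fun j => a (e.symm j), ?_⟩
    intro s t ht i hti
    have hrel := ht (e ⟨s, i⟩)
    refine ha ⟨s, i⟩ (fun i' => t i' (e ⟨s, i⟩)) hrel ?_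
    show t i (e ⟨s, i⟩) = _
    rw [hti]
    simp
  have h31 : (∃ x, Isolated (pow A r) x) →
      ∀ φ : PH σ 0, φ.Proper → ¬ φ.Sat A Fin.elim0 := by
    rintro ⟨x, hx⟩ φ hp hs
    refine proper_not_sat (pow A r) x hx φ Fin.elim0 hp ?_
    refine sat_pow A r φ Fin.elim0 (fun j => ?_)
    have : (fun i : Fin 0 => (Fin.elim0 : Fin 0 → Fin r → α) i j) = (Fin.elim0 : Fin 0 → α) := by
      funext i; exact Fin.elim0 i
    rw [this]; exact hs
  have h12 : (∀ φ : PH σ 0, φ.Proper → ¬ φ.Sat A Fin.elim0) →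
      ∀ s (p : Fin (σ.ar s)), ¬ (minProper s p).Sat A Fin.elim0 := by
    intro h1 s p
    exact h1 _ (minProper_proper s p)
  exact ⟨⟨h12, fun h2 => h31 (h23 h2)⟩,
    ⟨h23, fun h3 s p => h31 h3 _ (minProper_proper s p)⟩⟩
end
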